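/- For complex numbers a, b, c with a ≠ 0 and b ≠ 0, there exists a function δ(k) > 0 such that whenever |b|, |c| ≤ k for a fixed k and |a| < δ(k), the equation b·conj(a)·(1+|x|²) + c − x = 0 has a solution x ∈ ℂ. More precisely: if 4·|b·conj(a)|·(|b·conj(a)|·(1+|c|²) + |c|) < 1, then there exists x ∈ ℂ with b·conj(a)·(1+|x|²) + c − x = 0. -/

import Mathlib

theorem stmt9 (a b c : ℂ) (ha : a ≠ 0) (hb : b ≠ 0)
    (hsmall : 4 * ‖b * starRingEnd ℂ a‖ *
        (‖b * starRingEnd ℂ a‖ * (1 + ‖c‖ ^ 2) + ‖c‖) < 1) :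
    ∃ x : ℂ, b * starRingEnd ℂ a * (1 + ((‖x‖ : ℝ) : ℂ) ^ 2) + c - x = 0 := by
  set m := b * starRingEnd ℂ a with hm
  have hm0 : m ≠ 0 := mul_ne_zero hb (by simpa using ha)
  set r := ‖m‖ with hr
  set s := ‖c‖ with hs
  have hr0 : (0:ℝ) < r := norm_pos_iff.mpr hm0
  have hs0 : (0:ℝ) ≤ s := norm_nonneg c
  set B : ℝ := 2 * (c * (starRingEnd ℂ) m).re - 1 with hB
  set C : ℝ := 1 + s ^ 2 with hC
  set D : ℝ := B ^ 2 - 4 * r ^ 2 * C with hD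
  have hre : |(c * (starRingEnd ℂ) m).re| ≤ s * r := by
    calc |(c * (starRingEnd ℂ) m).re| ≤ ‖c * (starRingEnd ℂ) m‖ :=
          Complex.abs_re_le_norm _
      _ = s * r := by rw [norm_mul, RCLike.norm_conj]
  have hre' := abs_le.mp hre
  have hDpos : 0 ≤ D := by
    nlinarith [hre'.1, hre'.2, hr0, hs0, sq_nonneg s, sq_nonneg r, mul_pos hr0 hr0]
  set t : ℝ := (-B + Real.sqrt D) / (2 * r ^ 2) with ht
  have hA : (r:ℝ) ^ 2 ≠ 0 := by positivity
  have hsq : Real.sqrt D ^ 2 = D := Real.sq_sqrt hDpos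
  have hquad : r ^ 2 * t ^ 2 + B * t + C = 0 := by
    rw [ht]
    field_simp
    nlinarith [hsq]
  have hnm : Complex.normSq m = r ^ 2 := by
    rw [Complex.normSq_eq_norm_sq]
  have hcs : Complex.normSq c = s ^ 2 := by
    rw [Complex.normSq_eq_norm_sq]
  set x : ℂ := c + m * (t : ℂ) with hxdef
  have hxnorm : (1:ℝ) + ‖x‖ ^ 2 = t := by
    have h1 : ‖x‖ ^ 2 = Complex.normSq x := by
      rw [← Complex.sq_norm]
    have h2 : Complex.normSq x =
        s ^ 2 + 2 * (c * (starRingEnd ℂ) m).re * t + r ^ 2 * t ^ 2 := by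
      rw [hxdef, Complex.normSq_add]
      have e1 : Complex.normSq (m * (t:ℂ)) = r ^ 2 * t ^ 2 := by
        rw [Complex.normSq_mul, Complex.normSq_ofReal, hnm]; ring
      have e2 : (c * (starRingEnd ℂ) (m * (t:ℂ))).re = (c * (starRingEnd ℂ) m).re * t := by
        rw [map_mul, Complex.conj_ofReal, ← mul_assoc]
        simp [Complex.mul_re]
      rw [e1, e2, hcs]; ring
    rw [h1, h2]
    nlinarith [hquad]
  refine ⟨x, ?_⟩
  have hc2 : (1:ℂ) + ((‖x‖ : ℝ) : ℂ) ^ 2 = (t : ℂ) := by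
    have h := Complex.ofReal_inj.mpr hxnorm
    push_cast at h
    exact h
  rw [hc2, hxdef]; ring
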